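/- Let (Ω, F, ℙ) be a probability space, δ > 0, ε ∈ (0,1), C < ∞, n₀ ∈ ℕ, and p ∈ (0,1) with (1 − ε)^(δ/(2+δ)) < 1 − p. Let τ : Ω → ℕ ∪ {∞} be measurable with ℙ(τ > n) ≤ (1 − ε)^(n−1) for all n ≥ 1, and let (Δₙ)_{n≥0} be real random variables with E[|Δₙ|^(2+δ)] < ∞ for all n, with Δₙ = 0 almost surely on {τ ≤ n} for all n ≥ 1, and with E[|Δₙ|^(2+δ)] ≤ C for all n ≥ n₀. Let G be a random variable, independent of the σ-algebra generated by (Δₙ)_{n≥0}, with ℙ(G = n) = (1 − p)^n · p for n ∈ {0,1,2,…}. Then the random variable H = ∑_{n=0}^{G} Δₙ / (1 − p)^n (an almost surely finite sum) is square-integrable, the partial sums Zₘ = ∑_{n=0}^{m} Δₙ · 1{n ≤ G} / (1 − p)^n converge to H almost surely and in L²(ℙ), E[H] = ∑_{n=0}^{∞} E[Δₙ] (the series converging absolutely), and E[H²] = ∑_{n=0}^{∞} (1 − p)^{−n} · ( E[Δₙ²] + 2 ∑_{ℓ=n+1}^{∞} E[Δₙ · Δ_ℓ] ) < ∞. -/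

import Mathlib

open MeasureTheory ProbabilityTheory Filter

local notation "⟪" x ", " y "⟫" => @inner ℝ _ _ x y

private lemma RG_upper_summable {g : ℕ × ℕ → ℝ} (hg : Summable g) :
    Summable (fun pq : ℕ × ℕ => g (pq.1, pq.1 + 1 + pq.2)) := by
  have hinj : Function.Injective (fun pq : ℕ × ℕ => ((pq.1, pq.1 + 1 + pq.2) : ℕ × ℕ)) := by
    intro a b h
    simp only [Prod.mk.injEq] at h
    exact Prod.ext_iff.mpr ⟨h.1, by omega⟩
  exact hg.comp_injective hinj

private lemma RG_tsum_prod_symm {g : ℕ × ℕ → ℝ} (hg : Summable g)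
    (hsymm : ∀ n ℓ : ℕ, g (n, ℓ) = g (ℓ, n)) :
    ∑' p : ℕ × ℕ, g p
      = ∑' n : ℕ, g (n, n) + 2 * ∑' n : ℕ, ∑' k : ℕ, g (n, n + 1 + k) := by
  classical
  set D : ℕ × ℕ → ℝ := fun p => if p.1 = p.2 then g p else 0 with hD_def
  set U : ℕ × ℕ → ℝ := fun p => if p.1 < p.2 then g p else 0 with hU_def
  set L : ℕ × ℕ → ℝ := fun p => if p.2 < p.1 then g p else 0 with hL_def
  have habs : Summable fun p => |g p| := hg.abs
  have hD : Summable D := by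
    refine habs.of_norm_bounded fun p => ?_
    by_cases h : p.1 = p.2 <;> simp [hD_def, h, abs_nonneg]
  have hU : Summable U := by
    refine habs.of_norm_bounded fun p => ?_
    by_cases h : p.1 < p.2 <;> simp [hU_def, h, abs_nonneg]
  have hL : Summable L := by
    refine habs.of_norm_bounded fun p => ?_
    by_cases h : p.2 < p.1 <;> simp [hL_def, h, abs_nonneg]
  have hsplit : ∀ p : ℕ × ℕ, g p = D p + U p + L p := by
    intro p
    rcases lt_trichotomy p.1 p.2 with h | h | h
    · simp [hD_def, hU_def, hL_def, h, h.ne, (lt_asymm h), Nat.lt_asymm]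
    · simp [hD_def, hU_def, hL_def, h]
    · simp [hD_def, hU_def, hL_def, h, h.ne', (lt_asymm h)]
  have htsum_split : ∑' p, g p = ∑' p, D p + ∑' p, U p + ∑' p, L p := by
    calc ∑' p, g p = ∑' p, (D p + U p + L p) := tsum_congr hsplit
      _ = ∑' p, (D p + U p) + ∑' p, L p := (hD.add hU).tsum_add hL
      _ = ∑' p, D p + ∑' p, U p + ∑' p, L p := by rw [hD.tsum_add hU]
  have hdiaginj : Function.Injective (fun n : ℕ => ((n, n) : ℕ × ℕ)) := by
    intro a b h; exact congrArg Prod.fst h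
  have hDdiag : ∑' p, D p = ∑' n : ℕ, g (n, n) := by
    rw [← hdiaginj.tsum_eq (f := D)]
    · exact tsum_congr fun n => by simp [hD_def]
    · intro p hp
      have : p.1 = p.2 := by by_contra h; simp [hD_def, h] at hp
      exact ⟨p.1, Prod.ext_iff.mpr ⟨rfl, this⟩⟩
  have hupinj : Function.Injective (fun pq : ℕ × ℕ => ((pq.1, pq.1 + 1 + pq.2) : ℕ × ℕ)) := by
    intro a b h
    simp only [Prod.mk.injEq] at h
    exact Prod.ext_iff.mpr ⟨h.1, by omega⟩
  have hUup : ∑' p, U p = ∑' n : ℕ, ∑' k : ℕ, g (n, n + 1 + k) := by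
    rw [← hupinj.tsum_eq (f := U)]
    · have h1 : ∀ pq : ℕ × ℕ, U (pq.1, pq.1 + 1 + pq.2) = g (pq.1, pq.1 + 1 + pq.2) := by
        intro pq; simp only [hU_def]; rw [if_pos (by omega)]
      rw [tsum_congr h1]
      exact (RG_upper_summable hg).tsum_prod' fun n => (RG_upper_summable hg).prod_factor n
    · intro p hp
      have h2 : p.1 < p.2 := by by_contra h; simp [hU_def, h] at hp
      refine ⟨(p.1, p.2 - p.1 - 1), Prod.ext_iff.mpr ⟨rfl, ?_⟩⟩
      show p.1 + 1 + (p.2 - p.1 - 1) = p.2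
      omega
  have hLU : ∑' p, L p = ∑' p, U p := by
    rw [← (Equiv.prodComm ℕ ℕ).tsum_eq L]
    refine tsum_congr fun p => ?_
    simp only [hL_def, hU_def, Equiv.prodComm_apply, Prod.swap, Prod.fst_swap, Prod.snd_swap]
    by_cases h : p.1 < p.2
    · simp only [h, if_pos, if_true]
      exact hsymm p.2 p.1
    · simp [h]
  rw [htsum_split, hDdiag, hLU, hUup]; ring

private lemma RG_coeFn_sum {Ω : Type*} [MeasurableSpace Ω] (μ : Measure Ω)
    (F : ℕ → Lp ℝ 2 μ) (s : Finset ℕ) :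
    ⇑(∑ n ∈ s, F n) =ᵐ[μ] fun ω => ∑ n ∈ s, F n ω := by
  classical
  induction s using Finset.induction_on with
  | empty => simp only [Finset.sum_empty]; exact Lp.coeFn_zero ℝ 2 μ
  | insert a s' h ih =>
    rw [Finset.sum_insert h]
    filter_upwards [Lp.coeFn_add (F a) (∑ n ∈ s', F n), ih] with ω h1 h2
    rw [h1, Pi.add_apply, h2, Finset.sum_insert h]

/-- Properties of the generalized Rhee--Glynn estimator `H = ∑_{n=0}^G Δₙ / (1-p)^n` with a
Geometric truncation variable `G` independent of `(Δₙ)` (Assumption 4): `H` is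
square-integrable, the partial sums `Zₘ = ∑_{n=0}^m Δₙ 1{n ≤ G}/(1-p)^n` converge to `H`
almost surely and in `L²(ℙ)`, `E[H] = ∑ₙ E[Δₙ]` with the series converging absolutely, and
`E[H²] = ∑ₙ (1-p)^{-n} (E[Δₙ²] + 2 ∑_{ℓ>n} E[Δₙ Δ_ℓ])`. -/
theorem rheeGlynn_truncated_estimator {Ω : Type*} [MeasurableSpace Ω]
    (μ : Measure Ω) [IsProbabilityMeasure μ]
    (δ : ℝ) (hδ : 0 < δ) (ε : ℝ) (hε0 : 0 < ε) (hε1 : ε < 1)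
    (C : ℝ) (n₀ : ℕ) (p : ℝ) (hp0 : 0 < p) (hp1 : p < 1)
    (hpε : (1 - ε) ^ (δ / (2 + δ)) < 1 - p)
    (τ : Ω → ℕ∞) (hτ : Measurable τ)
    (hτtail : ∀ n : ℕ, 1 ≤ n → μ {ω | (n : ℕ∞) < τ ω} ≤ ENNReal.ofReal ((1 - ε) ^ (n - 1)))
    (Δ : ℕ → Ω → ℝ) (hΔmeas : ∀ n, Measurable (Δ n))
    (hΔmom : ∀ n, Integrable (fun ω => |Δ n ω| ^ ((2 : ℝ) + δ)) μ)
    (hΔvanish : ∀ n : ℕ, 1 ≤ n → ∀ᵐ ω ∂μ, τ ω ≤ (n : ℕ∞) → Δ n ω = 0)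
    (hΔbound : ∀ n, n₀ ≤ n → ∫ ω, |Δ n ω| ^ ((2 : ℝ) + δ) ∂μ ≤ C)
    (G : Ω → ℕ) (hG : Measurable G)
    (hGgeom : ∀ n : ℕ, μ {ω | G ω = n} = ENNReal.ofReal ((1 - p) ^ n * p))
    (hGindep : Indep (MeasurableSpace.comap G inferInstance)
      (⨆ n : ℕ, MeasurableSpace.comap (Δ n) inferInstance) μ)
    (Z : ℕ → Ω → ℝ)
    (hZ_def : ∀ m ω, Z m ω
      = ∑ n ∈ Finset.range (m + 1), Δ n ω * (if n ≤ G ω then 1 else 0) / (1 - p) ^ n)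
    (H : Ω → ℝ)
    (hH_def : ∀ ω, H ω = ∑ n ∈ Finset.range (G ω + 1), Δ n ω / (1 - p) ^ n) :
    MemLp H 2 μ
    ∧ (∀ᵐ ω ∂μ, Tendsto (fun m => Z m ω) atTop (nhds (H ω)))
    ∧ Tendsto (fun m => ∫ ω, (Z m ω - H ω) ^ 2 ∂μ) atTop (nhds 0)
    ∧ Summable (fun n => |∫ ω, Δ n ω ∂μ|)
    ∧ ∫ ω, H ω ∂μ = ∑' n : ℕ, ∫ ω, Δ n ω ∂μ
    ∧ ∫ ω, (H ω) ^ 2 ∂μ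
        = ∑' n : ℕ, ((1 - p) ^ n)⁻¹
            * ((∫ ω, (Δ n ω) ^ 2 ∂μ) + 2 * ∑' ℓ : ℕ, ∫ ω, Δ n ω * Δ (n + 1 + ℓ) ω ∂μ) := by
  classical
  have hq0 : (0:ℝ) < 1 - p := by linarith
  have hq1 : (1:ℝ) - p < 1 := by linarith
  set q : ℝ := 1 - p with hqdef
  have hqn : ∀ n : ℕ, (0:ℝ) < q ^ n := fun n => pow_pos hq0 n
  have hε' : (0:ℝ) < 1 - ε := by linarith
  set r : ℝ := (1 - ε) ^ (δ / (2 + δ)) with hrdef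
  have hr0 : 0 < r := Real.rpow_pos_of_pos hε' _
  have hrq : r < q := hpε
  have h2δ : (0:ℝ) < 2 + δ := by linarith
  set χ : ℕ → Ω → ℝ := fun n ω => if n ≤ G ω then 1 else 0 with hχdef
  set f : ℕ → Ω → ℝ := fun n ω => Δ n ω * χ n ω / q ^ n with hfdef
  have hχmeas : ∀ n, Measurable (χ n) := by
    intro n
    simp only [hχdef]
    exact Measurable.ite (hG (MeasurableSet.of_discrete (s := {k : ℕ | n ≤ k})))
      measurable_const measurable_const
  have hfmeas : ∀ n, Measurable (f n) := fun n => ((hΔmeas n).mul (hχmeas n)).div_const _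
  have hZf : ∀ m ω, Z m ω = ∑ n ∈ Finset.range (m + 1), f n ω := by
    intro m ω
    simp only [hfdef, hχdef]
    exact hZ_def m ω
  -- pointwise identification of Z with H for large m
  have hHf : ∀ ω m, G ω ≤ m → Z m ω = H ω := by
    intro ω m hm
    calc Z m ω = ∑ n ∈ Finset.range (m + 1), f n ω := hZf m ω
      _ = ∑ n ∈ Finset.range (G ω + 1), f n ω := by
          refine (Finset.sum_subset (Finset.range_subset_range.mpr (by omega)) ?_).symm
          intro x hx hnx
          simp only [Finset.mem_range] at hx hnx
          have hgt : ¬ (x ≤ G ω) := by omega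
          simp [hfdef, hχdef, hgt]
      _ = ∑ n ∈ Finset.range (G ω + 1), Δ n ω / q ^ n := by
          refine Finset.sum_congr rfl fun n hn => ?_
          simp only [Finset.mem_range] at hn
          have hle : n ≤ G ω := by omega
          simp [hfdef, hχdef, hle]
      _ = H ω := (hH_def ω).symm
  have htendZ : ∀ ω, Tendsto (fun m => Z m ω) atTop (nhds (H ω)) := by
    intro ω
    have he : (fun m => Z m ω) =ᶠ[atTop] (fun _ => H ω) :=
      eventually_atTop.mpr ⟨G ω, fun m hm => hHf ω m hm⟩
    exact Tendsto.congr' he.symm tendsto_const_nhds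
  -- moments
  have hM : ∀ n, MemLp (Δ n) (ENNReal.ofReal (2 + δ)) μ := by
    intro n
    have h1 : MemLp (fun x => ‖Δ n x‖ ^ (ENNReal.ofReal (2+δ)).toReal)
        (ENNReal.ofReal (2+δ) / ENNReal.ofReal (2+δ)) μ := by
      rw [ENNReal.div_self (by simp [h2δ]) (by simp), ENNReal.toReal_ofReal h2δ.le]
      exact memLp_one_iff_integrable.mpr ((hΔmom n).congr (Eventually.of_forall fun ω => by
        simp [Real.norm_eq_abs, abs_of_nonneg (Real.rpow_nonneg (abs_nonneg _) _)]))
    exact (memLp_norm_rpow_iff (hΔmeas n).aestronglyMeasurable (by simp [h2δ]) (by simp)).mp h1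
  have h2le : (2 : ENNReal) ≤ ENNReal.ofReal (2 + δ) := by
    rw [show (2 : ENNReal) = ENNReal.ofReal 2 by norm_num]
    exact ENNReal.ofReal_le_ofReal (by linarith)
  have hΔ2 : ∀ n, MemLp (Δ n) 2 μ := fun n => (hM n).mono_exponent h2le
  have hf2 : ∀ n, MemLp (f n) 2 μ := by
    intro n
    refine MemLp.of_le_mul (c := (q ^ n)⁻¹) (hΔ2 n) (hfmeas n).aestronglyMeasurable
      (Eventually.of_forall fun ω => ?_)
    simp only [hfdef]
    have h1 : |χ n ω| ≤ 1 := by by_cases h : n ≤ G ω <;> simp [hχdef, h]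
    rw [Real.norm_eq_abs, Real.norm_eq_abs, abs_div, abs_mul, abs_of_pos (hqn n),
      div_eq_mul_inv]
    calc |Δ n ω| * |χ n ω| * (q ^ n)⁻¹ ≤ |Δ n ω| * 1 * (q ^ n)⁻¹ := by
          refine mul_le_mul_of_nonneg_right ?_ (by positivity)
          exact mul_le_mul_of_nonneg_left h1 (abs_nonneg _)
      _ = (q ^ n)⁻¹ * |Δ n ω| := by ring
  set F : ℕ → Lp ℝ 2 μ := fun n => (hf2 n).toLp (f n) with hFdef
  have hFcoe : ∀ n, ⇑(F n) =ᵐ[μ] f n := fun n => (hf2 n).coeFn_toLp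
  -- inner products as integrals
  have hinner : ∀ (x y : Lp ℝ 2 μ) (u v : Ω → ℝ), ⇑x =ᵐ[μ] u → ⇑y =ᵐ[μ] v →
      ⟪x, y⟫ = ∫ ω, u ω * v ω ∂μ := by
    intro x y u v hx hy
    rw [L2.inner_def]
    refine integral_congr_ae ?_
    filter_upwards [hx, hy] with ω h1 h2
    simp [h1, h2, RCLike.inner_apply, starRingEnd_apply, mul_comm]
  have hsq : ∀ x : Lp ℝ 2 μ, ∫ ω, (x ω) ^ 2 ∂μ = ‖x‖ ^ 2 := by
    intro x
    rw [← real_inner_self_eq_norm_sq, L2.inner_def]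
    refine integral_congr_ae (Eventually.of_forall fun ω => ?_)
    simp [RCLike.inner_apply, starRingEnd_apply, sq]
  -- independence
  have hGm : Measurable[MeasurableSpace.comap G inferInstance] G :=
    measurable_iff_comap_le.mpr le_rfl
  have hχG : ∀ n, Measurable[MeasurableSpace.comap G inferInstance] (χ n) := by
    intro n
    simp only [hχdef]
    exact Measurable.ite (hGm (MeasurableSet.of_discrete (s := {k : ℕ | n ≤ k})))
      measurable_const measurable_const
  have hΔM : ∀ k, Measurable[⨆ j : ℕ, MeasurableSpace.comap (Δ j) inferInstance] (Δ k) :=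
    fun k => measurable_iff_comap_le.mpr
      (le_iSup (fun j => MeasurableSpace.comap (Δ j) inferInstance) k)
  have hIndep : ∀ (n : ℕ) (Y : Ω → ℝ),
      Measurable[⨆ j : ℕ, MeasurableSpace.comap (Δ j) inferInstance] Y →
      IndepFun (χ n) Y μ := fun n Y hY =>
    indep_of_indep_of_le_right (indep_of_indep_of_le_left hGindep (hχG n).comap_le) hY.comap_le
  -- geometric tail of G
  have hGtail : ∀ n : ℕ, μ {ω | n ≤ G ω} = ENNReal.ofReal (q ^ n) := by
    intro n
    have hset : {ω | n ≤ G ω} = ⋃ k : ℕ, {ω | G ω = n + k} := by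
      ext ω
      simp only [Set.mem_setOf_eq, Set.mem_iUnion]
      exact ⟨fun h => ⟨G ω - n, by omega⟩, fun ⟨k, hk⟩ => by omega⟩
    have hdisj : Pairwise (Function.onFun Disjoint fun k : ℕ => {ω | G ω = n + k}) := by
      intro i j hij
      refine Set.disjoint_left.mpr fun ω hi hj => hij ?_
      simp only [Set.mem_setOf_eq] at hi hj
      omega
    have hmeasu : ∀ k : ℕ, MeasurableSet {ω | G ω = n + k} := fun k =>
      hG (measurableSet_singleton (n + k))
    rw [hset, measure_iUnion hdisj hmeasu]
    have hkey : ∀ k : ℕ, q ^ (n + k) * p = ((q ^ n) * p) * q ^ k := by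
      intro k; rw [pow_add]; ring
    have hsumm : Summable (fun k : ℕ => q ^ (n + k) * p) := by
      rw [summable_congr hkey]
      exact (summable_geometric_of_lt_one hq0.le hq1).mul_left _
    calc ∑' k, μ {ω | G ω = n + k} = ∑' k, ENNReal.ofReal (q ^ (n + k) * p) :=
          tsum_congr fun k => hGgeom (n + k)
      _ = ENNReal.ofReal (∑' k, q ^ (n + k) * p) :=
          (ENNReal.ofReal_tsum_of_nonneg (fun k => by positivity) hsumm).symm
      _ = ENNReal.ofReal (q ^ n) := by
          congr 1
          rw [tsum_congr hkey, tsum_mul_left, tsum_geometric_of_lt_one hq0.le hq1,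
            show 1 - q = p by rw [hqdef]; ring]
          field_simp
  have hχint : ∀ n, ∫ ω, χ n ω ∂μ = q ^ n := by
    intro n
    have hi : χ n = Set.indicator {ω | n ≤ G ω} (fun _ => (1:ℝ)) := by
      funext ω
      by_cases h : n ≤ G ω <;> simp [hχdef, h, Set.indicator_apply]
    rw [hi, integral_indicator_const (1:ℝ)
        (show MeasurableSet {ω | n ≤ G ω} from hG (MeasurableSet.of_discrete (s := {k : ℕ | n ≤ k}))),
      measureReal_def, hGtail n, smul_eq_mul, mul_one, ENNReal.toReal_ofReal (by positivity)]
  -- key integral identities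
  have hfint : ∀ n, ∫ ω, f n ω ∂μ = ∫ ω, Δ n ω ∂μ := by
    intro n
    have hmul := (hIndep n (Δ n) (hΔM n)).integral_mul_eq_mul_integral
      (hχmeas n).aestronglyMeasurable (hΔmeas n).aestronglyMeasurable
    have hmul' : ∫ ω, χ n ω * Δ n ω ∂μ = (∫ ω, χ n ω ∂μ) * ∫ ω, Δ n ω ∂μ := by
      simpa [Pi.mul_apply] using hmul
    calc ∫ ω, f n ω ∂μ = ∫ ω, (χ n ω * Δ n ω) * (q ^ n)⁻¹ ∂μ := by
          refine integral_congr_ae (Eventually.of_forall fun ω => ?_)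
          simp only [hfdef]
          ring
      _ = (∫ ω, χ n ω * Δ n ω ∂μ) * (q ^ n)⁻¹ := integral_mul_const _ _
      _ = (q ^ n * ∫ ω, Δ n ω ∂μ) * (q ^ n)⁻¹ := by rw [hmul', hχint n]
      _ = ∫ ω, Δ n ω ∂μ := by field_simp
  have hpair : ∀ n ℓ : ℕ, n ≤ ℓ →
      ∫ ω, f n ω * f ℓ ω ∂μ = (q ^ n)⁻¹ * ∫ ω, Δ n ω * Δ ℓ ω ∂μ := by
    intro n ℓ hnl
    have hχχ : ∀ ω, χ n ω * χ ℓ ω = χ ℓ ω := by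
      intro ω
      by_cases h : ℓ ≤ G ω
      · have h' : n ≤ G ω := hnl.trans h
        simp [hχdef, h, h']
      · simp [hχdef, h]
    have hmul := (hIndep ℓ (fun ω => Δ n ω * Δ ℓ ω) ((hΔM n).mul (hΔM ℓ))).integral_mul_eq_mul_integral
      (hχmeas ℓ).aestronglyMeasurable ((hΔmeas n).mul (hΔmeas ℓ)).aestronglyMeasurable
    have hmul' : ∫ ω, χ ℓ ω * (Δ n ω * Δ ℓ ω) ∂μ
        = (∫ ω, χ ℓ ω ∂μ) * ∫ ω, Δ n ω * Δ ℓ ω ∂μ := by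
      simpa [Pi.mul_apply] using hmul
    have e0 : ∀ ω, f n ω * f ℓ ω = (χ ℓ ω * (Δ n ω * Δ ℓ ω)) * ((q ^ n)⁻¹ * (q ^ ℓ)⁻¹) := by
      intro ω
      have hc := hχχ ω
      simp only [hfdef]
      calc Δ n ω * χ n ω / q ^ n * (Δ ℓ ω * χ ℓ ω / q ^ ℓ)
          = (χ n ω * χ ℓ ω) * (Δ n ω * Δ ℓ ω) * ((q ^ n)⁻¹ * (q ^ ℓ)⁻¹) := by ring
        _ = (χ ℓ ω * (Δ n ω * Δ ℓ ω)) * ((q ^ n)⁻¹ * (q ^ ℓ)⁻¹) := by rw [hc]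
    calc ∫ ω, f n ω * f ℓ ω ∂μ
        = ∫ ω, (χ ℓ ω * (Δ n ω * Δ ℓ ω)) * ((q ^ n)⁻¹ * (q ^ ℓ)⁻¹) ∂μ :=
          integral_congr_ae (Eventually.of_forall e0)
      _ = (∫ ω, χ ℓ ω * (Δ n ω * Δ ℓ ω) ∂μ) * ((q ^ n)⁻¹ * (q ^ ℓ)⁻¹) := integral_mul_const _ _
      _ = (q ^ ℓ * ∫ ω, Δ n ω * Δ ℓ ω ∂μ) * ((q ^ n)⁻¹ * (q ^ ℓ)⁻¹) := by rw [hmul', hχint ℓ]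
      _ = (q ^ n)⁻¹ * ∫ ω, Δ n ω * Δ ℓ ω ∂μ := by
          field_simp
  have hFinner : ∀ n ℓ : ℕ, ⟪F n, F ℓ⟫ = ∫ ω, f n ω * f ℓ ω ∂μ :=
    fun n ℓ => hinner (F n) (F ℓ) (f n) (f ℓ) (hFcoe n) (hFcoe ℓ)
  have hnormFsq : ∀ n, ‖F n‖ ^ 2 = (q ^ n)⁻¹ * ∫ ω, Δ n ω * Δ n ω ∂μ := by
    intro n
    rw [← real_inner_self_eq_norm_sq, hFinner n n, hpair n n le_rfl]
  -- Hölder bound on second moments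
  have hC0 : 0 ≤ C :=
    le_trans (integral_nonneg fun ω => Real.rpow_nonneg (abs_nonneg _) _) (hΔbound n₀ le_rfl)
  set N : ℕ := max n₀ 1 with hNdef
  set D : ℝ := C ^ (2/(2+δ)) * r⁻¹ with hDdef
  have hD0 : 0 ≤ D := by
    rw [hDdef]
    have := Real.rpow_nonneg hC0 (2/(2+δ))
    positivity
  have hEΔ : ∀ n, N ≤ n → ∫ ω, Δ n ω * Δ n ω ∂μ ≤ D * r ^ n := by
    intro n hn
    have hn1 : 1 ≤ n := le_trans (le_max_right _ _) hn
    have hn0 : n₀ ≤ n := le_trans (le_max_left _ _) hn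
    set s : Set Ω := {ω | (n:ℕ∞) < τ ω} with hsdef
    have hs : MeasurableSet s := hτ (MeasurableSet.of_discrete (s := {x : ℕ∞ | (n:ℕ∞) < x}))
    have hstep : ∫ ω, Δ n ω * Δ n ω ∂μ
        = ∫ ω, (Δ n ω * Δ n ω) * s.indicator (fun _ => (1:ℝ)) ω ∂μ := by
      refine integral_congr_ae ?_
      filter_upwards [hΔvanish n hn1] with ω hω
      by_cases h : ω ∈ s
      · simp [h]
      · have hτω : τ ω ≤ (n:ℕ∞) := not_lt.mp (by simpa [hsdef] using h)
        simp [h, hω hτω]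
    -- Hölder
    have hconj : Real.HolderConjugate ((2+δ)/2) ((2+δ)/δ) := by
      rw [Real.holderConjugate_iff]; constructor
      · rw [lt_div_iff₀ (by norm_num)]; linarith
      · rw [inv_div, inv_div, div_add_div _ _ h2δ.ne' h2δ.ne',
          show (2:ℝ) * (2 + δ) + (2 + δ) * δ = (2+δ)*(2+δ) by ring, div_self (by positivity)]
    have hexp : ENNReal.ofReal (2+δ) / 2 = ENNReal.ofReal ((2+δ)/2) := by
      rw [ENNReal.ofReal_div_of_pos (by norm_num)]
      norm_num
    have hXX : MemLp (fun ω => Δ n ω * Δ n ω) (ENNReal.ofReal ((2+δ)/2)) μ := by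
      have h2 := (hM n).norm_rpow_div 2
      rw [hexp] at h2
      refine h2.ae_eq (Eventually.of_forall fun ω => ?_)
      rw [ENNReal.toReal_ofNat, Real.norm_eq_abs, show (2:ℝ) = ((2:ℕ):ℝ) by norm_num,
        Real.rpow_natCast, sq_abs, sq]
    have hind : MemLp (s.indicator fun _ => (1:ℝ)) (ENNReal.ofReal ((2+δ)/δ)) μ :=
      memLp_indicator_const _ hs 1 (Or.inr (measure_ne_top μ s))
    have hH2 := integral_mul_norm_le_Lp_mul_Lq hconj hXX hind
    have e1 : ∫ ω, (Δ n ω * Δ n ω) * s.indicator (fun _ => (1:ℝ)) ω ∂μ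
        = ∫ ω, ‖Δ n ω * Δ n ω‖ * ‖s.indicator (fun _ => (1:ℝ)) ω‖ ∂μ := by
      refine integral_congr_ae (Eventually.of_forall fun ω => ?_)
      dsimp only
      rw [Real.norm_eq_abs, Real.norm_eq_abs, abs_of_nonneg (mul_self_nonneg _)]
      congr 1
      by_cases h : ω ∈ s <;> simp [h]
    have e2 : ∫ ω, ‖Δ n ω * Δ n ω‖ ^ ((2+δ)/2) ∂μ = ∫ ω, |Δ n ω| ^ ((2:ℝ) + δ) ∂μ := by
      refine integral_congr_ae (Eventually.of_forall fun ω => ?_)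
      dsimp only
      rw [Real.norm_eq_abs, abs_mul, ← sq, ← Real.rpow_natCast (|Δ n ω|) 2,
        ← Real.rpow_mul (abs_nonneg _)]
      norm_num
      rw [mul_div_cancel₀ _ (by norm_num : (2:ℝ) ≠ 0)]
    have e3 : ∫ ω, ‖s.indicator (fun _ => (1:ℝ)) ω‖ ^ ((2+δ)/δ) ∂μ = (μ s).toReal := by
      have hpt : ∀ ω, ‖s.indicator (fun _ => (1:ℝ)) ω‖ ^ ((2+δ)/δ)
          = s.indicator (fun _ => (1:ℝ)) ω := by
        intro ω
        by_cases h : ω ∈ s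
        · simp [h]
        · simp [h, Real.zero_rpow (by positivity : (2+δ)/δ ≠ 0)]
      rw [integral_congr_ae (Eventually.of_forall hpt), integral_indicator_const _ hs]
      simp [measureReal_def]
    rw [e2, e3] at hH2
    have hb1 : (∫ ω, |Δ n ω| ^ ((2:ℝ)+δ) ∂μ) ^ (1/((2+δ)/2)) ≤ C ^ (2/(2+δ)) := by
      rw [one_div_div]
      exact Real.rpow_le_rpow (integral_nonneg fun ω => Real.rpow_nonneg (abs_nonneg _) _)
        (hΔbound n hn0) (by positivity)
    have hμs : (μ s).toReal ≤ (1-ε) ^ (n-1) := by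
      have h := hτtail n hn1
      have h' := ENNReal.toReal_mono (by simp) h
      rwa [ENNReal.toReal_ofReal (by positivity)] at h'
    have hb2 : ((μ s).toReal) ^ (1/((2+δ)/δ)) ≤ r ^ (n-1) := by
      rw [one_div_div]
      calc ((μ s).toReal) ^ (δ/(2+δ))
          ≤ ((1-ε) ^ (n-1)) ^ (δ/(2+δ)) :=
            Real.rpow_le_rpow ENNReal.toReal_nonneg hμs (by positivity)
        _ = r ^ (n-1) := by
            rw [hrdef, ← Real.rpow_natCast (1-ε) (n-1), ← Real.rpow_mul hε'.le, mul_comm,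
              Real.rpow_mul hε'.le, Real.rpow_natCast]
    have hrn : r ^ (n-1) = r⁻¹ * r ^ n := by
      have h : r ^ n = r ^ (n-1) * r := by
        rw [← pow_succ]
        congr 1
        omega
      rw [h]
      field_simp
    calc ∫ ω, Δ n ω * Δ n ω ∂μ
        = ∫ ω, (Δ n ω * Δ n ω) * s.indicator (fun _ => (1:ℝ)) ω ∂μ := hstep
      _ = ∫ ω, ‖Δ n ω * Δ n ω‖ * ‖s.indicator (fun _ => (1:ℝ)) ω‖ ∂μ := e1
      _ ≤ (∫ ω, |Δ n ω| ^ ((2:ℝ)+δ) ∂μ) ^ (1/((2+δ)/2)) * ((μ s).toReal) ^ (1/((2+δ)/δ)) := hH2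
      _ ≤ C ^ (2/(2+δ)) * r ^ (n-1) := by
          refine mul_le_mul hb1 hb2 (by positivity) (Real.rpow_nonneg hC0 _)
      _ = D * r ^ n := by rw [hrn, hDdef]; ring
  -- summability of the Lp norms
  have hsqform : ∀ n, N ≤ n → ‖F n‖ ≤ Real.sqrt D * (Real.sqrt (r/q)) ^ n := by
    intro n hn
    have h1 : ‖F n‖ ^ 2 ≤ D * (r/q) ^ n := by
      rw [hnormFsq n]
      calc (q ^ n)⁻¹ * ∫ ω, Δ n ω * Δ n ω ∂μ
          ≤ (q ^ n)⁻¹ * (D * r ^ n) :=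
            mul_le_mul_of_nonneg_left (hEΔ n hn) (by positivity)
        _ = D * (r/q) ^ n := by
            rw [div_pow]
            field_simp
    have h2 : ‖F n‖ = Real.sqrt (‖F n‖ ^ 2) := (Real.sqrt_sq (norm_nonneg _)).symm
    rw [h2]
    have hrq0 : (0:ℝ) ≤ r / q := by positivity
    calc Real.sqrt (‖F n‖ ^ 2) ≤ Real.sqrt (D * (r/q) ^ n) := Real.sqrt_le_sqrt h1
      _ = Real.sqrt D * (Real.sqrt (r/q)) ^ n := by
          rw [Real.sqrt_mul hD0,
            show (r/q) ^ n = ((Real.sqrt (r/q)) ^ n) ^ 2 by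
              rw [← pow_mul, mul_comm, pow_mul, Real.sq_sqrt hrq0],
            Real.sqrt_sq (by positivity)]
  have hs1 : Real.sqrt (r/q) < 1 := by
    rw [show (1:ℝ) = Real.sqrt 1 by simp]
    exact Real.sqrt_lt_sqrt (by positivity) ((div_lt_one hq0).mpr hrq)
  have hsummF : Summable (fun n => ‖F n‖) := by
    rw [← summable_nat_add_iff N]
    refine Summable.of_nonneg_of_le (fun k => norm_nonneg _) (fun k => ?_)
      (((summable_geometric_of_lt_one (Real.sqrt_nonneg _) hs1).mul_left
        (Real.sqrt D * (Real.sqrt (r/q)) ^ N)))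
    calc ‖F (k + N)‖ ≤ Real.sqrt D * (Real.sqrt (r/q)) ^ (k + N) := hsqform (k+N) (by omega)
      _ = Real.sqrt D * (Real.sqrt (r/q)) ^ N * (Real.sqrt (r/q)) ^ k := by
          rw [pow_add]; ring
  have hFsum : Summable F := hsummF.of_norm
  obtain ⟨A, hA⟩ := hFsum
  have hS : Tendsto (fun m => ∑ n ∈ Finset.range (m + 1), F n) atTop (nhds A) :=
    hA.tendsto_sum_nat.comp (tendsto_add_atTop_nat 1)
  have hScoe : ∀ m, ⇑(∑ n ∈ Finset.range (m + 1), F n) =ᵐ[μ] Z m := by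
    intro m
    filter_upwards [RG_coeFn_sum μ F (Finset.range (m + 1)), ae_all_iff.mpr hFcoe] with ω h1 h2
    rw [h1, hZf m ω]
    exact Finset.sum_congr rfl fun n _ => h2 n
  -- identification of the Lp limit with H
  have hAH : ⇑A =ᵐ[μ] H := by
    have h1 : Tendsto (fun m => eLpNorm (⇑(∑ n ∈ Finset.range (m + 1), F n) - ⇑A) 2 μ)
        atTop (nhds 0) :=
      (Lp.tendsto_Lp_iff_tendsto_eLpNorm' _ A).mp hS
    have h2 : TendstoInMeasure μ (fun m => ⇑(∑ n ∈ Finset.range (m + 1), F n)) atTop ⇑A :=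
      tendstoInMeasure_of_tendsto_eLpNorm (by norm_num)
        (fun m => Lp.aestronglyMeasurable _) (Lp.aestronglyMeasurable _) h1
    obtain ⟨ns, hns, hae⟩ := h2.exists_seq_tendsto_ae
    filter_upwards [hae, ae_all_iff.mpr hScoe] with ω hω1 hω2
    have h3 : Tendsto (fun i => Z (ns i) ω) atTop (nhds (A ω)) := by
      refine hω1.congr fun i => ?_
      exact hω2 (ns i)
    have h4 : Tendsto (fun i => Z (ns i) ω) atTop (nhds (H ω)) :=
      (htendZ ω).comp hns.tendsto_atTop
    exact tendsto_nhds_unique h3 h4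
  have hHmem : MemLp H 2 μ := (Lp.memLp A).ae_eq hAH
  refine ⟨hHmem, ae_of_all μ htendZ, ?_, ?_, ?_, ?_⟩
  -- L² convergence
  · have he : ∀ m, ∫ ω, (Z m ω - H ω) ^ 2 ∂μ = ‖(∑ n ∈ Finset.range (m + 1), F n) - A‖ ^ 2 := by
      intro m
      rw [← hsq ((∑ n ∈ Finset.range (m + 1), F n) - A)]
      refine integral_congr_ae ?_
      filter_upwards [hScoe m, hAH, Lp.coeFn_sub (∑ n ∈ Finset.range (m + 1), F n) A]
        with ω h1 h2 h3
      rw [h3, Pi.sub_apply, h1, h2]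
    rw [show (fun m => ∫ ω, (Z m ω - H ω) ^ 2 ∂μ)
        = fun m => ‖(∑ n ∈ Finset.range (m + 1), F n) - A‖ ^ 2 from funext he]
    have h0 : Tendsto (fun m => (∑ n ∈ Finset.range (m + 1), F n) - A) atTop (nhds (A - A)) :=
      hS.sub tendsto_const_nhds
    rw [sub_self] at h0
    simpa using (h0.norm.pow 2)
  -- absolute summability of E[Δₙ]
  · have hone : MemLp (fun _ : Ω => (1:ℝ)) 2 μ := memLp_const 1
    have honeF : ∀ n, ⟪hone.toLp (fun _ => 1), F n⟫ = ∫ ω, Δ n ω ∂μ := by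
      intro n
      rw [hinner _ (F n) (fun _ => 1) (f n) hone.coeFn_toLp (hFcoe n)]
      simp only [one_mul]
      exact hfint n
    refine Summable.of_nonneg_of_le (fun n => abs_nonneg _) (fun n => ?_)
      (hsummF.mul_left ‖hone.toLp (fun _ => 1)‖)
    rw [← honeF n]
    exact abs_real_inner_le_norm _ _
  -- E[H] = ∑ E[Δₙ]
  · have hone : MemLp (fun _ : Ω => (1:ℝ)) 2 μ := memLp_const 1
    have honeF : ∀ n, ⟪hone.toLp (fun _ => 1), F n⟫ = ∫ ω, Δ n ω ∂μ := by
      intro n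
      rw [hinner _ (F n) (fun _ => 1) (f n) hone.coeFn_toLp (hFcoe n)]
      simp only [one_mul]
      exact hfint n
    have h := (innerSL ℝ (hone.toLp (fun _ => 1))).hasSum hA
    simp only [innerSL_apply_apply] at h
    have e : ⟪hone.toLp (fun _ => 1), A⟫ = ∫ ω, H ω ∂μ := by
      rw [hinner _ A (fun _ => 1) H hone.coeFn_toLp hAH]
      simp
    rw [show (fun n => ⟪hone.toLp (fun _ => 1), F n⟫) = fun n => ∫ ω, Δ n ω ∂μ from
      funext honeF, e] at h
    exact h.tsum_eq.symm
  -- second moment formula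
  · set g : ℕ × ℕ → ℝ := fun pq => ⟪F pq.1, F pq.2⟫ with hgdef
    have hgsymm : ∀ n ℓ : ℕ, g (n, ℓ) = g (ℓ, n) := fun n ℓ => real_inner_comm _ _
    have hgsum : Summable g := by
      refine Summable.of_norm_bounded
        (hsummF.mul_of_nonneg hsummF (fun n => norm_nonneg _) (fun n => norm_nonneg _))
        fun pq => ?_
      rw [Real.norm_eq_abs]
      exact abs_real_inner_le_norm _ _
    have hAA : ∫ ω, (H ω) ^ 2 ∂μ = ⟪A, A⟫ := by
      rw [real_inner_self_eq_norm_sq, ← hsq A]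
      refine integral_congr_ae ?_
      filter_upwards [hAH] with ω h
      rw [h]
    have hFA : ∀ n, ⟪F n, A⟫ = ∑' ℓ, g (n, ℓ) := by
      intro n
      have h := (innerSL ℝ (F n)).hasSum hA
      simp only [innerSL_apply_apply] at h
      exact h.tsum_eq.symm
    have hAF : HasSum (fun n => ⟪F n, A⟫) ⟪A, A⟫ := by
      have h := (innerSL ℝ A).hasSum hA
      simp only [innerSL_apply_apply] at h
      rwa [show (fun n => ⟪A, F n⟫) = fun n => ⟪F n, A⟫ from
        funext fun n => real_inner_comm _ _] at h
    have hdiag : ∀ n, g (n, n) = (q ^ n)⁻¹ * ∫ ω, (Δ n ω) ^ 2 ∂μ := by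
      intro n
      simp only [hgdef]
      rw [hFinner n n, hpair n n le_rfl]
      congr 1
      exact integral_congr_ae (Eventually.of_forall fun ω => (sq (Δ n ω)).symm)
    have hup : ∀ n k, g (n, n + 1 + k) = (q ^ n)⁻¹ * ∫ ω, Δ n ω * Δ (n + 1 + k) ω ∂μ := by
      intro n k
      simp only [hgdef]
      rw [hFinner n (n + 1 + k), hpair n (n + 1 + k) (by omega)]
    have hsumdiag : Summable (fun n => g (n, n)) :=
      hgsum.comp_injective fun a b h => congrArg Prod.fst h
    have hupsum : Summable (fun pq : ℕ × ℕ => g (pq.1, pq.1 + 1 + pq.2)) :=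
      RG_upper_summable hgsum
    have hfiber : Summable (fun n => ∑' k, g (n, n + 1 + k)) :=
      ⟨_, hupsum.hasSum.prod_fiberwise fun n => (hupsum.prod_factor n).hasSum⟩
    have htermeq : ∀ n : ℕ, (q ^ n)⁻¹
        * ((∫ ω, (Δ n ω) ^ 2 ∂μ) + 2 * ∑' ℓ, ∫ ω, Δ n ω * Δ (n + 1 + ℓ) ω ∂μ)
        = g (n, n) + 2 * ∑' k, g (n, n + 1 + k) := by
      intro n
      rw [hdiag n]
      have h1 : ∑' k, g (n, n + 1 + k) = (q ^ n)⁻¹ * ∑' ℓ, ∫ ω, Δ n ω * Δ (n + 1 + ℓ) ω ∂μ := by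
        rw [tsum_congr (fun k => hup n k), tsum_mul_left]
      rw [h1]
      ring
    calc ∫ ω, (H ω) ^ 2 ∂μ = ⟪A, A⟫ := hAA
      _ = ∑' n, ⟪F n, A⟫ := hAF.tsum_eq.symm
      _ = ∑' n, ∑' ℓ, g (n, ℓ) := tsum_congr hFA
      _ = ∑' pq : ℕ × ℕ, g pq := (hgsum.tsum_prod' fun n => hgsum.prod_factor n).symm
      _ = ∑' n, g (n, n) + 2 * ∑' n, ∑' k, g (n, n + 1 + k) := RG_tsum_prod_symm hgsum hgsymm
      _ = ∑' n : ℕ, (q ^ n)⁻¹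
            * ((∫ ω, (Δ n ω) ^ 2 ∂μ) + 2 * ∑' ℓ, ∫ ω, Δ n ω * Δ (n + 1 + ℓ) ω ∂μ) := by
          rw [tsum_congr htermeq, hsumdiag.tsum_add (hfiber.mul_left 2), tsum_mul_left]
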